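/- Let z ∈ ℂ^N with Re z_j > 0 for all j, and let ν̲ = (ν₀, ν) with Re ν₀ > 0 and (Re ν_1/Re ν₀, …, Re ν_n/Re ν₀) in the interior of the full-dimensional Newton polytope Δ_G. Then for each j ∈ {1, …, N}, the function w ↦ J_A(ν̲, (z_1, …, z_{j−1}, w, z_{j+1}, …, z_N)) is complex-differentiable at w = z_j with derivative −J_A(ν̲ + (1, a_j), z); that is, ∂J_A(ν̲, z)/∂z_j = −J_A((ν₀+1, ν+a_j), z), where both generalized Feynman integrals converge absolutely. -/

import Mathlib

open MeasureTheory Real Set Finset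

noncomputable def expD (n : ℕ) (t : Fin n → ℝ) : (Fin n → ℝ) →L[ℝ] (Fin n → ℝ) :=
  ContinuousLinearMap.pi fun i => rexp (t i) • ContinuousLinearMap.proj i

lemma exp_hasFDerivAt (n : ℕ) (t : Fin n → ℝ) :
    HasFDerivAt (fun t : Fin n → ℝ => fun i => rexp (t i)) (expD n t) t := by
  rw [hasFDerivAt_pi']
  intro i
  exact (ContinuousLinearMap.proj i : (Fin n → ℝ) →L[ℝ] ℝ).hasFDerivAt.exp

lemma exp_det (n : ℕ) (t : Fin n → ℝ) : (expD n t).det = ∏ i, rexp (t i) := by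
  have : (expD n t : (Fin n → ℝ) →ₗ[ℝ] (Fin n → ℝ)) =
      Matrix.toLin' (Matrix.diagonal fun i => rexp (t i)) := by
    apply LinearMap.ext; intro v; funext i
    simp [expD, Matrix.toLin'_apply, Matrix.mulVec_diagonal]
  rw [ContinuousLinearMap.det, this, LinearMap.det_toLin', Matrix.det_diagonal]

lemma orth_eq_image (n : ℕ) :
    {x : Fin n → ℝ | ∀ i, 0 < x i} = (fun t : Fin n → ℝ => fun i => rexp (t i)) '' Set.univ := by
  ext x
  constructor
  · intro hx
    exact ⟨fun i => Real.log (x i), trivial, funext fun i => Real.exp_log (hx i)⟩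
  · rintro ⟨t, -, rfl⟩ i
    exact Real.exp_pos _

lemma my_integrable_exp_neg_abs {c : ℝ} (hc : 0 < c) :
    Integrable (fun t : ℝ => rexp (-(c * |t|))) := by
  have h1 : IntegrableOn (fun t : ℝ => rexp (-(c * |t|))) (Ici 0) := by
    rw [integrableOn_Ici_iff_integrableOn_Ioi]
    exact (exp_neg_integrableOn_Ioi 0 hc).congr_fun
      (fun t ht => by rw [abs_of_pos ht]; ring_nf) measurableSet_Ioi
  have h2 : IntegrableOn (fun t : ℝ => rexp (-(c * |t|))) (Iic 0) := by
    have h_map : (volume.restrict (Ici (0:ℝ))).map Neg.neg = volume.restrict (Iic 0) := by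
      conv => rhs; rw [← Measure.map_neg_eq_self (volume : Measure ℝ),
        measurableEmbedding_neg.restrict_map]
      simp
    rw [IntegrableOn, ← h_map, measurableEmbedding_neg.integrable_map_iff]
    exact h1.congr_fun (fun t _ => by simp) measurableSet_Ici
  have := h2.union h1
  rw [Iic_union_Ici] at this; rwa [← integrableOn_univ]

lemma my_interior_gap {n N : ℕ} (hN : 0 < N) (A : Fin N → Fin n → ℝ) {c : Fin n → ℝ}
    (hc : c ∈ interior (convexHull ℝ (Set.range A))) :
    ∃ ε > 0, ∀ t : Fin n → ℝ,
      (∑ i, c i * t i) + ε * ∑ i, |t i| ≤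
        (Finset.univ.sup' (Finset.univ_nonempty_iff.2 (Fin.pos_iff_nonempty.1 hN))
          fun j => ∑ i, A j i * t i) := by
  have hne : (Finset.univ : Finset (Fin N)).Nonempty :=
    Finset.univ_nonempty_iff.2 (Fin.pos_iff_nonempty.1 hN)
  obtain ⟨δ, hδ, hball⟩ := Metric.isOpen_iff.1 isOpen_interior c hc
  refine ⟨δ/2, by positivity, fun t => ?_⟩
  set M : ℝ := Finset.univ.sup' hne fun j => ∑ i, A j i * t i with hM
  have hhalf : convexHull ℝ (Set.range A) ⊆ {y : Fin n → ℝ | ∑ i, y i * t i ≤ M} := by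
    apply convexHull_min
    · rintro _ ⟨j, rfl⟩
      exact Finset.le_sup' (fun j => ∑ i, A j i * t i) (Finset.mem_univ j)
    · exact convex_halfSpace_le ⟨fun a b => by simp [add_mul, Finset.sum_add_distrib],
        fun r a => by simp [Finset.mul_sum, mul_assoc]⟩ M
  set p : Fin n → ℝ := fun i => c i + (if 0 ≤ t i then δ/2 else -(δ/2)) with hp
  have hpmem : p ∈ convexHull ℝ (Set.range A) := by
    refine interior_subset (hball ?_)
    rw [Metric.mem_ball, dist_pi_lt_iff hδ]
    intro i
    rw [Real.dist_eq, hp]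
    simp only [add_sub_cancel_left]
    split <;> [skip; rw [abs_neg]] <;> rw [abs_of_pos (by positivity)] <;> linarith
  have := hhalf hpmem
  simp only [Set.mem_setOf_eq, hp] at this
  calc (∑ i, c i * t i) + δ/2 * ∑ i, |t i|
      = ∑ i, (c i + (if 0 ≤ t i then δ/2 else -(δ/2))) * t i := by
        rw [Finset.mul_sum, ← Finset.sum_add_distrib]
        congr 1; funext i
        rcases le_or_gt 0 (t i) with h | h
        · rw [if_pos h, abs_of_nonneg h]; ring
        · rw [if_neg (not_le.2 h), abs_of_neg h]; ring
    _ ≤ M := this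

set_option maxHeartbeats 1000000 in
lemma euler_mellin_integrable {n N : ℕ} (hN : 0 < N) (a : Fin N → Fin n → ℕ)
    (b : Fin n → ℝ) {β : ℝ} (hβ : 0 < β)
    (hmem : (fun i => b i / β) ∈
      interior (convexHull ℝ (Set.range fun j : Fin N => fun i : Fin n => (a j i : ℝ)))) :
    IntegrableOn
      (fun x : Fin n → ℝ => (∏ i, x i ^ (b i - 1)) * (∑ j, ∏ i, x i ^ (a j i)) ^ (-β))
      {x : Fin n → ℝ | ∀ i, 0 < x i} volume := by
  have hne : (Finset.univ : Finset (Fin N)).Nonempty :=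
    Finset.univ_nonempty_iff.2 (Fin.pos_iff_nonempty.1 hN)
  obtain ⟨ε, hε, hgap⟩ := my_interior_gap hN (fun j i => (a j i : ℝ)) hmem
  rw [orth_eq_image n,
    integrableOn_image_iff_integrableOn_abs_det_fderiv_smul volume MeasurableSet.univ
      (fun t _ => (exp_hasFDerivAt n t).hasFDerivWithinAt)
      (fun t _ s _ h => funext fun i => Real.exp_injective (congrFun h i)) _]
  have key : ∀ t : Fin n → ℝ,
      |(expD n t).det| • ((∏ i, rexp (t i) ^ (b i - 1)) *
          (∑ j, ∏ i, rexp (t i) ^ (a j i)) ^ (-β)) =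
      rexp (∑ i, b i * t i) * (∑ j, rexp (∑ i, (a j i : ℝ) * t i)) ^ (-β) := by
    intro t
    rw [exp_det, smul_eq_mul, abs_of_pos (Finset.prod_pos fun i _ => Real.exp_pos _)]
    have h1 : ∀ i, rexp (t i) ^ (b i - 1) = rexp ((b i - 1) * t i) := fun i => by
      rw [Real.rpow_def_of_pos (Real.exp_pos _), Real.log_exp]; ring_nf
    have h2 : ∀ j, (∏ i, rexp (t i) ^ (a j i)) = rexp (∑ i, (a j i : ℝ) * t i) := fun j => by
      rw [Real.exp_sum]
      exact Finset.prod_congr rfl fun i _ => (Real.exp_nat_mul (t i) (a j i)).symm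
    simp_rw [h1, h2]
    rw [← mul_assoc, ← Real.exp_sum, ← Real.exp_sum, ← Real.exp_add, ← Finset.sum_add_distrib]
    congr 2
    exact Finset.sum_congr rfl fun i _ => by ring
  simp_rw [key]
  rw [integrableOn_univ]
  -- dominating function
  set M : (Fin n → ℝ) → ℝ := fun t => Finset.univ.sup' hne fun j => ∑ i, (a j i : ℝ) * t i
    with hMdef
  have hSbig : ∀ t : Fin n → ℝ, rexp (M t) ≤ ∑ j, rexp (∑ i, (a j i : ℝ) * t i) := by
    intro t
    obtain ⟨j0, -, hj0⟩ := Finset.exists_mem_eq_sup' hne fun j => ∑ i, (a j i : ℝ) * t i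
    rw [show M t = ∑ i, (a j0 i : ℝ) * t i from hj0]
    exact Finset.single_le_sum (f := fun j => rexp (∑ i, (a j i : ℝ) * t i))
      (fun j _ => (Real.exp_pos _).le) (Finset.mem_univ j0)
  have hbd : ∀ t : Fin n → ℝ,
      ‖rexp (∑ i, b i * t i) * (∑ j, rexp (∑ i, (a j i : ℝ) * t i)) ^ (-β)‖ ≤
        ∏ i, rexp (-(β * ε * |t i|)) := by
    intro t
    rw [Real.norm_eq_abs, abs_of_nonneg (by positivity)]
    have h3 : (∑ j, rexp (∑ i, (a j i : ℝ) * t i)) ^ (-β) ≤ rexp (M t) ^ (-β) :=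
      Real.rpow_le_rpow_of_nonpos (Real.exp_pos _) (hSbig t) (neg_nonpos.2 hβ.le)
    have h4 : rexp (M t) ^ (-β) = rexp (-β * M t) := by
      rw [Real.rpow_def_of_pos (Real.exp_pos _), Real.log_exp]; ring_nf
    calc rexp (∑ i, b i * t i) * (∑ j, rexp (∑ i, (a j i : ℝ) * t i)) ^ (-β)
        ≤ rexp (∑ i, b i * t i) * rexp (-β * M t) := by
          exact mul_le_mul_of_nonneg_left (le_trans h3 (le_of_eq h4)) (Real.exp_pos _).le
      _ = rexp (∑ i, b i * t i - β * M t) := by rw [← Real.exp_add]; ring_nf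
      _ ≤ rexp (-(β * ε) * ∑ i, |t i|) := by
          apply Real.exp_le_exp.2
          have := hgap t
          have hb' : (∑ i, b i * t i) = β * ∑ i, b i / β * t i := by
            rw [Finset.mul_sum]
            exact Finset.sum_congr rfl fun i _ => by field_simp
          rw [hb']
          nlinarith [hgap t, mul_le_mul_of_nonneg_left (hgap t) hβ.le]
      _ = ∏ i, rexp (-(β * ε * |t i|)) := by
          rw [← Real.exp_sum]
          congr 1
          rw [Finset.mul_sum]
          exact Finset.sum_congr rfl fun i _ => by ring
  have hcont : Continuous fun t : Fin n → ℝ =>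
      rexp (∑ i, b i * t i) * (∑ j, rexp (∑ i, (a j i : ℝ) * t i)) ^ (-β) := by
    have hc1 : Continuous fun t : Fin n → ℝ => (∑ i, b i * t i) := by fun_prop
    have hc2 : Continuous fun t : Fin n → ℝ => ∑ j, rexp (∑ i, (a j i : ℝ) * t i) := by fun_prop
    exact (hc1.rexp).mul (hc2.rpow_const fun t =>
      Or.inl (ne_of_gt (Finset.sum_pos (fun j _ => Real.exp_pos _) hne)))
  refine Integrable.mono' ?_ hcont.aestronglyMeasurable (ae_of_all _ hbd)
  exact Integrable.fintype_prod (f := fun (i : Fin n) (s : ℝ) => rexp (-(β * ε * |s|)))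
    fun i => by simpa [mul_assoc] using my_integrable_exp_neg_abs (mul_pos hβ hε)

-- Re of the polynomial sum is bounded below by c₀ * S
lemma re_G_ge {n N : ℕ} (a : Fin N → Fin n → ℕ) (c' : Fin N → ℂ) {c₀ : ℝ}
    (hre : ∀ k, c₀ ≤ (c' k).re) (x : Fin n → ℝ) (hx : ∀ i, 0 < x i) :
    c₀ * (∑ k, ∏ i, x i ^ (a k i)) ≤ (∑ k, c' k * ∏ i, (x i : ℂ) ^ (a k i)).re := by
  rw [Complex.re_sum, Finset.mul_sum]
  refine Finset.sum_le_sum fun k _ => ?_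
  have hprod : (∏ i, ((x i : ℂ)) ^ (a k i)) = ((∏ i, x i ^ (a k i) : ℝ) : ℂ) := by
    push_cast; rfl
  rw [hprod, Complex.mul_re, Complex.ofReal_re, Complex.ofReal_im, mul_zero, sub_zero]
  exact mul_le_mul_of_nonneg_right (hre k)
    (Finset.prod_nonneg fun i _ => pow_nonneg (hx i).le _)

lemma norm_integrand_le {n N : ℕ} (hN : 0 < N) (a : Fin N → Fin n → ℕ) (c' : Fin N → ℂ)
    {c₀ : ℝ} (hc₀ : 0 < c₀) (hre : ∀ k, c₀ ≤ (c' k).re) (w : Fin n → ℂ) {μ : ℂ}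
    (hμ : 0 ≤ μ.re) (x : Fin n → ℝ) (hx : ∀ i, 0 < x i) :
    ‖(∏ i, (x i : ℂ) ^ (w i)) * (∑ k, c' k * ∏ i, (x i : ℂ) ^ (a k i)) ^ (-μ)‖ ≤
      (rexp (π/2 * |μ.im|) * c₀ ^ (-μ.re)) *
        ((∏ i, x i ^ (w i).re) * (∑ k, ∏ i, x i ^ (a k i)) ^ (-μ.re)) := by
  have hne : (Finset.univ : Finset (Fin N)).Nonempty :=
    Finset.univ_nonempty_iff.2 (Fin.pos_iff_nonempty.1 hN)
  set S : ℝ := ∑ k, ∏ i, x i ^ (a k i) with hS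
  have hSpos : 0 < S :=
    Finset.sum_pos (fun k _ => Finset.prod_pos fun i _ => pow_pos (hx i) _) hne
  set G : ℂ := ∑ k, c' k * ∏ i, (x i : ℂ) ^ (a k i) with hG
  have hGre : c₀ * S ≤ G.re := re_G_ge a c' hre x hx
  have hGrepos : 0 < G.re := lt_of_lt_of_le (mul_pos hc₀ hSpos) hGre
  have hGne : G ≠ 0 := fun h => by simp [h] at hGrepos
  have habs : c₀ * S ≤ ‖G‖ := le_trans hGre (Complex.re_le_norm G)
  have h1 : ‖∏ i, (x i : ℂ) ^ (w i)‖ = ∏ i, x i ^ (w i).re := by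
    rw [norm_prod]
    exact Finset.prod_congr rfl fun i _ => Complex.norm_cpow_eq_rpow_re_of_pos (hx i) _
  have h2 : ‖G ^ (-μ)‖ ≤ rexp (π/2 * |μ.im|) * (c₀ * S) ^ (-μ.re) := by
    rw [Complex.norm_cpow_of_ne_zero hGne]
    have hexp : 1 / rexp (G.arg * (-μ).im) ≤ rexp (π/2 * |μ.im|) := by
      rw [one_div, ← Real.exp_neg, Real.exp_le_exp]
      calc -(G.arg * (-μ).im) ≤ |G.arg * (-μ).im| := neg_le_abs _
        _ = |G.arg| * |μ.im| := by rw [abs_mul, Complex.neg_im, abs_neg]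
        _ ≤ π/2 * |μ.im| := by
            refine mul_le_mul_of_nonneg_right ?_ (abs_nonneg _)
            exact Complex.abs_arg_le_pi_div_two_iff.2 hGrepos.le
    have hbase : ‖G‖ ^ (-μ).re ≤ (c₀ * S) ^ (-μ.re) := by
      rw [Complex.neg_re]
      exact Real.rpow_le_rpow_of_nonpos (mul_pos hc₀ hSpos) habs (neg_nonpos.2 hμ)
    rw [div_eq_mul_one_div]
    calc ‖G‖ ^ (-μ).re * (1 / rexp (G.arg * (-μ).im))
        ≤ (c₀ * S) ^ (-μ.re) * rexp (π/2 * |μ.im|) := by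
          refine mul_le_mul hbase hexp (by positivity) (by positivity)
      _ = rexp (π/2 * |μ.im|) * (c₀ * S) ^ (-μ.re) := by ring
  calc ‖(∏ i, (x i : ℂ) ^ (w i)) * G ^ (-μ)‖
      = (∏ i, x i ^ (w i).re) * ‖G ^ (-μ)‖ := by rw [norm_mul, h1]
    _ ≤ (∏ i, x i ^ (w i).re) * (rexp (π/2 * |μ.im|) * (c₀ * S) ^ (-μ.re)) := by
        refine mul_le_mul_of_nonneg_left h2 ?_
        exact Finset.prod_nonneg fun i _ => Real.rpow_nonneg (hx i).le _
    _ = (rexp (π/2 * |μ.im|) * c₀ ^ (-μ.re)) * ((∏ i, x i ^ (w i).re) * S ^ (-μ.re)) := by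
        rw [Real.mul_rpow hc₀.le hSpos.le]; ring

lemma isOpen_orth (n : ℕ) : IsOpen {x : Fin n → ℝ | ∀ i, 0 < x i} := by
  have : {x : Fin n → ℝ | ∀ i, 0 < x i} = Set.pi Set.univ (fun _ => Ioi (0:ℝ)) := by
    ext x; simp [Set.mem_pi]
  rw [this]
  exact isOpen_set_pi Set.finite_univ fun _ _ => isOpen_Ioi

lemma contOn_P {n : ℕ} (w : Fin n → ℂ) :
    ContinuousOn (fun x : Fin n → ℝ => ∏ i, (x i : ℂ) ^ (w i))
      {x : Fin n → ℝ | ∀ i, 0 < x i} := by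
  refine continuousOn_finset_prod _ fun i _ => ?_
  intro x hx
  have hcont : ContinuousAt (fun x : Fin n → ℝ => ((x i : ℝ) : ℂ)) x :=
    Complex.continuous_ofReal.continuousAt.comp (continuous_apply i).continuousAt
  exact ((continuousAt_cpow_const (by
    exact Complex.mem_slitPlane_iff.2 (Or.inl (by simpa using hx i)))).comp hcont).continuousWithinAt

lemma cont_m {n N : ℕ} (a : Fin N → Fin n → ℕ) (k : Fin N) :
    Continuous (fun x : Fin n → ℝ => ∏ i, (x i : ℂ) ^ (a k i)) := by fun_prop

lemma cont_G {n N : ℕ} (a : Fin N → Fin n → ℕ) (c' : Fin N → ℂ) :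
    Continuous (fun x : Fin n → ℝ => ∑ k, c' k * ∏ i, (x i : ℂ) ^ (a k i)) := by fun_prop

lemma contOn_Gpow {n N : ℕ} (hN : 0 < N) (a : Fin N → Fin n → ℕ) (c' : Fin N → ℂ)
    {c₀ : ℝ} (hc₀ : 0 < c₀) (hre : ∀ k, c₀ ≤ (c' k).re) (μ : ℂ) :
    ContinuousOn (fun x : Fin n → ℝ => (∑ k, c' k * ∏ i, (x i : ℂ) ^ (a k i)) ^ (-μ))
      {x : Fin n → ℝ | ∀ i, 0 < x i} := by
  intro x hx
  have hSpos : 0 < ∑ k, ∏ i, x i ^ (a k i) :=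
    Finset.sum_pos (fun k _ => Finset.prod_pos fun i _ => pow_pos (hx i) _)
      (Finset.univ_nonempty_iff.2 (Fin.pos_iff_nonempty.1 hN))
  have hGre : 0 < (∑ k, c' k * ∏ i, (x i : ℂ) ^ (a k i)).re :=
    lt_of_lt_of_le (mul_pos hc₀ hSpos) (re_G_ge a c' hre x hx)
  exact ((cont_G a c').continuousAt.cpow continuousAt_const
    (Or.inl hGre)).continuousWithinAt

lemma complex_integrand_integrableOn {n N : ℕ} (hN : 0 < N) (a : Fin N → Fin n → ℕ)
    (c' : Fin N → ℂ) {c₀ : ℝ} (hc₀ : 0 < c₀) (hre : ∀ k, c₀ ≤ (c' k).re)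
    (w : Fin n → ℂ) {μ : ℂ} (hμ : 0 < μ.re)
    (hmem : (fun i => ((w i).re + 1) / μ.re) ∈
      interior (convexHull ℝ (Set.range fun j : Fin N => fun i : Fin n => (a j i : ℝ)))) :
    IntegrableOn (fun x : Fin n → ℝ =>
        (∏ i, (x i : ℂ) ^ (w i)) * (∑ k, c' k * ∏ i, (x i : ℂ) ^ (a k i)) ^ (-μ))
      {x : Fin n → ℝ | ∀ i, 0 < x i} volume := by
  have hg := euler_mellin_integrable hN a (fun i => (w i).re + 1) hμ hmem
  have hmeas := (isOpen_orth n).measurableSet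
  refine Integrable.mono' (hg.const_mul (rexp (π/2*|μ.im|) * c₀ ^ (-μ.re)))
    (((contOn_P w).mul (contOn_Gpow hN a c' hc₀ hre μ)).aestronglyMeasurable hmeas) ?_
  rw [ae_restrict_iff' hmeas]
  refine ae_of_all _ fun x hx => ?_
  have := norm_integrand_le hN a c' hc₀ hre w hμ.le x hx
  simpa [add_sub_cancel_right] using this



open MeasureTheory Complex Finset

/-- Toric derivative identity: on the region of absolute convergence,
`∂J_A(ν̲, z)/∂zⱼ = −J_A((ν₀+1, ν+aⱼ), z)`, where both generalized Feynman integrals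
converge absolutely. -/
theorem feynman_toric_derivative (n N : ℕ) (hn : 1 ≤ n) (hN : n + 1 ≤ N)
    (a : Fin N → Fin n → ℕ)
    (z : Fin N → ℂ) (hz : ∀ j, 0 < (z j).re)
    (ν₀ : ℂ) (ν : Fin n → ℂ) (hν₀ : 0 < ν₀.re)
    (hmem : (fun i => (ν i).re / ν₀.re) ∈
      interior (convexHull ℝ (Set.range fun j : Fin N => fun i : Fin n => (a j i : ℝ))))
    (j : Fin N) :
    IntegrableOn
        (fun x : Fin n → ℝ =>
          (∏ i, (x i : ℂ) ^ (ν i - 1)) *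
            (∑ j', z j' * ∏ i, (x i : ℂ) ^ (a j' i)) ^ (-ν₀))
        {x : Fin n → ℝ | ∀ i, 0 < x i} volume ∧
      IntegrableOn
        (fun x : Fin n → ℝ =>
          (∏ i, (x i : ℂ) ^ (ν i + (a j i : ℂ) - 1)) *
            (∑ j', z j' * ∏ i, (x i : ℂ) ^ (a j' i)) ^ (-(ν₀ + 1)))
        {x : Fin n → ℝ | ∀ i, 0 < x i} volume ∧
      HasDerivAt
        (fun w : ℂ => Complex.Gamma ν₀ *
          ∫ x in {x : Fin n → ℝ | ∀ i, 0 < x i},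
            (∏ i, (x i : ℂ) ^ (ν i - 1)) *
              (∑ j', Function.update z j w j' * ∏ i, (x i : ℂ) ^ (a j' i)) ^ (-ν₀))
        (-(Complex.Gamma (ν₀ + 1) *
          ∫ x in {x : Fin n → ℝ | ∀ i, 0 < x i},
            (∏ i, (x i : ℂ) ^ (ν i + (a j i : ℂ) - 1)) *
              (∑ j', z j' * ∏ i, (x i : ℂ) ^ (a j' i)) ^ (-(ν₀ + 1))))
        (z j) := by
  have hN0 : 0 < N := lt_of_lt_of_le (Nat.succ_pos n) hN
  have hneN : (Finset.univ : Finset (Fin N)).Nonempty :=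
    Finset.univ_nonempty_iff.2 (Fin.pos_iff_nonempty.1 hN0)
  have hmeas := (isOpen_orth n).measurableSet
  set c₀ : ℝ := Finset.univ.inf' hneN fun k => (z k).re with hc₀def
  have hc₀pos : 0 < c₀ := (Finset.lt_inf'_iff hneN).2 fun k _ => hz k
  have hc₀le : ∀ k, c₀ ≤ (z k).re := fun k => Finset.inf'_le _ (Finset.mem_univ k)
  have hν₀ne : ν₀ ≠ 0 := fun h => by simp [h] at hν₀
  -- membership rewrites
  have hmem1 : (fun i => (((ν i - 1 : ℂ)).re + 1) / ν₀.re) ∈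
      interior (convexHull ℝ (Set.range fun j : Fin N => fun i : Fin n => (a j i : ℝ))) := by
    have : (fun i => (((ν i - 1 : ℂ)).re + 1) / ν₀.re) = fun i => (ν i).re / ν₀.re := by
      funext i; simp [Complex.sub_re]
    rw [this]; exact hmem
  have hre2 : (0:ℝ) < (ν₀ + 1).re := by simp; linarith
  have hmem2 : (fun i => (((ν i + (a j i : ℂ) - 1 : ℂ)).re + 1) / (ν₀ + 1).re) ∈
      interior (convexHull ℝ (Set.range fun j : Fin N => fun i : Fin n => (a j i : ℝ))) := by
    have hcomb := (convex_convexHull ℝ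
        (Set.range fun j : Fin N => fun i : Fin n => (a j i : ℝ))).combo_interior_closure_mem_interior
      hmem (subset_closure (subset_convexHull ℝ _ ⟨j, rfl⟩))
      (a := ν₀.re / (ν₀.re + 1)) (b := 1 / (ν₀.re + 1))
      (by positivity) (by positivity) (by field_simp)
    have heq : (ν₀.re / (ν₀.re + 1)) • (fun i => (ν i).re / ν₀.re) +
        (1 / (ν₀.re + 1)) • (fun i : Fin n => (a j i : ℝ)) =
        fun i => (((ν i + (a j i : ℂ) - 1 : ℂ)).re + 1) / (ν₀ + 1).re := by
      funext i
      simp only [Pi.add_apply, Pi.smul_apply, smul_eq_mul, Complex.sub_re, Complex.add_re,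
        Complex.one_re, Complex.natCast_re]
      field_simp
      ring
    rw [← heq]; exact hcomb
  have I1 := complex_integrand_integrableOn hN0 a z hc₀pos hc₀le (fun i => ν i - 1) hν₀ hmem1
  have I2 := complex_integrand_integrableOn hN0 a z hc₀pos hc₀le
    (fun i => ν i + (a j i : ℂ) - 1) hre2 hmem2
  refine ⟨I1, I2, ?_⟩
  have hr : 0 < c₀ / 2 := half_pos hc₀pos
  have hupd : ∀ w ∈ Metric.ball (z j) (c₀/2), ∀ k, c₀/2 ≤ (Function.update z j w k).re := by
    intro w hw k
    rcases eq_or_ne k j with rfl | hk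
    · rw [Function.update_self]
      have h1 : |(w - z k).re| ≤ ‖w - z k‖ := Complex.abs_re_le_norm _
      have h2 : ‖w - z k‖ < c₀/2 := by rwa [Metric.mem_ball, Complex.dist_eq] at hw
      have h3 := hc₀le k
      have h4 := abs_lt.1 (lt_of_le_of_lt h1 h2)
      have h5 : (w - z k).re = w.re - (z k).re := by simp [Complex.sub_re]
      rw [h5] at h4
      linarith [h4.1]
    · rw [Function.update_of_ne hk]
      linarith [hc₀le k]
  set F : ℂ → (Fin n → ℝ) → ℂ := fun w x =>
    (∏ i, (x i : ℂ) ^ (ν i - 1)) *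
      (∑ j', Function.update z j w j' * ∏ i, (x i : ℂ) ^ (a j' i)) ^ (-ν₀) with hF
  set F' : ℂ → (Fin n → ℝ) → ℂ := fun w x =>
    (∏ i, (x i : ℂ) ^ (ν i - 1)) *
      (-ν₀ * (∑ j', Function.update z j w j' * ∏ i, (x i : ℂ) ^ (a j' i)) ^ (-ν₀ - 1) *
        ∏ i, (x i : ℂ) ^ (a j i)) with hF'
  set K : ℝ := ‖ν₀‖ * (rexp (π/2 * |ν₀.im|) * (c₀/2) ^ (-(ν₀.re + 1))) with hK
  set bnd : (Fin n → ℝ) → ℝ := fun x =>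
    K * ((∏ i, x i ^ ((ν i).re - 1)) * (∑ k, ∏ i, x i ^ (a k i)) ^ (-ν₀.re)) with hbnd
  have hbnd_int : Integrable bnd (volume.restrict {x : Fin n → ℝ | ∀ i, 0 < x i}) := by
    have h := euler_mellin_integrable hN0 a (fun i => (ν i).re) hν₀ hmem
    exact h.const_mul K
  have hFmeas : ∀ᶠ w in nhds (z j),
      AEStronglyMeasurable (F w) (volume.restrict {x : Fin n → ℝ | ∀ i, 0 < x i}) := by
    refine Filter.eventually_of_mem (Metric.ball_mem_nhds _ hr) fun w hw => ?_
    exact ((contOn_P (fun i => ν i - 1)).mul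
      (contOn_Gpow hN0 a _ hr (hupd w hw) ν₀)).aestronglyMeasurable hmeas
  have hFint : Integrable (F (z j)) (volume.restrict {x : Fin n → ℝ | ∀ i, 0 < x i}) := by
    have : F (z j) = fun x : Fin n → ℝ =>
        (∏ i, (x i : ℂ) ^ (ν i - 1)) * (∑ j', z j' * ∏ i, (x i : ℂ) ^ (a j' i)) ^ (-ν₀) := by
      simp only [hF, Function.update_eq_self]
    rw [this]
    exact I1
  have hF'meas : AEStronglyMeasurable (F' (z j))
      (volume.restrict {x : Fin n → ℝ | ∀ i, 0 < x i}) := by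
    have : F' (z j) = fun x : Fin n → ℝ =>
        (∏ i, (x i : ℂ) ^ (ν i - 1)) *
          (-ν₀ * (∑ j', z j' * ∏ i, (x i : ℂ) ^ (a j' i)) ^ (-(ν₀ + 1)) *
            ∏ i, (x i : ℂ) ^ (a j i)) := by
      simp only [hF', Function.update_eq_self, show (-ν₀ - 1 : ℂ) = -(ν₀ + 1) from by ring]
    rw [this]
    refine ((contOn_P (fun i => ν i - 1)).mul
      (((continuousOn_const.mul (contOn_Gpow hN0 a z hc₀pos hc₀le (ν₀ + 1)))).mul
        (cont_m a j).continuousOn)).aestronglyMeasurable hmeas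
  have hbd_all : ∀ x ∈ {x : Fin n → ℝ | ∀ i, 0 < x i}, ∀ w ∈ Metric.ball (z j) (c₀/2),
      ‖F' w x‖ ≤ bnd x := by
    intro x hx w hw
    have hSpos : 0 < ∑ k, ∏ i, x i ^ (a k i) :=
      Finset.sum_pos (fun k _ => Finset.prod_pos fun i _ => pow_pos (hx i) _) hneN
    have hMS : (∏ i, x i ^ (a j i)) ≤ ∑ k, ∏ i, x i ^ (a k i) :=
      Finset.single_le_sum (f := fun k => ∏ i, x i ^ (a k i))
        (fun k _ => Finset.prod_nonneg fun i _ => pow_nonneg (hx i).le _) (Finset.mem_univ j)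
    have hPQ := norm_integrand_le hN0 a (Function.update z j w) hr (hupd w hw)
      (fun i => ν i - 1) (μ := ν₀ + 1) hre2.le x hx
    simp only [Complex.add_re, Complex.add_im, Complex.one_re, Complex.one_im, add_zero,
      Complex.sub_re, Complex.one_re] at hPQ
    have eM : ‖∏ i, (x i : ℂ) ^ (a j i)‖ = ∏ i, x i ^ (a j i) := by
      rw [norm_prod]
      refine Finset.prod_congr rfl fun i _ => ?_
      rw [norm_pow, Complex.norm_real, Real.norm_eq_abs, abs_of_pos (hx i)]
    have e1 : F' w x = -ν₀ * (((∏ i, (x i : ℂ) ^ (ν i - 1)) *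
        (∑ j', Function.update z j w j' * ∏ i, (x i : ℂ) ^ (a j' i)) ^ (-(ν₀ + 1))) *
          ∏ i, (x i : ℂ) ^ (a j i)) := by
      simp only [hF', show (-ν₀ - 1 : ℂ) = -(ν₀ + 1) from by ring]
      ring
    have e2 : ‖F' w x‖ = ‖ν₀‖ *
        (‖(∏ i, (x i : ℂ) ^ (ν i - 1)) *
          (∑ j', Function.update z j w j' * ∏ i, (x i : ℂ) ^ (a j' i)) ^ (-(ν₀ + 1))‖ *
            ∏ i, x i ^ (a j i)) := by
      rw [e1, norm_mul, norm_mul, norm_neg, eM]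
    have hPrnn : (0:ℝ) ≤ ∏ i, x i ^ ((ν i).re - 1) :=
      Finset.prod_nonneg fun i _ => Real.rpow_nonneg (hx i).le _
    have hEnn : (0:ℝ) ≤ rexp (π/2 * |ν₀.im|) * (c₀/2) ^ (-(ν₀.re + 1)) :=
      mul_nonneg (Real.exp_pos _).le (Real.rpow_nonneg hr.le _)
    have step2 : (∏ i, x i ^ (a j i)) * (∑ k, ∏ i, x i ^ (a k i)) ^ (-(ν₀.re + 1)) ≤
        (∑ k, ∏ i, x i ^ (a k i)) ^ (-ν₀.re) := by
      have hSc : (∑ k, ∏ i, x i ^ (a k i)) *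
          (∑ k, ∏ i, x i ^ (a k i)) ^ (-(ν₀.re + 1)) = (∑ k, ∏ i, x i ^ (a k i)) ^ (-ν₀.re) := by
        have h := (Real.rpow_add hSpos 1 (-(ν₀.re + 1))).symm
        rw [Real.rpow_one] at h
        rw [h, show (1 + -(ν₀.re + 1)) = -ν₀.re from by ring]
      calc (∏ i, x i ^ (a j i)) * (∑ k, ∏ i, x i ^ (a k i)) ^ (-(ν₀.re + 1))
          ≤ (∑ k, ∏ i, x i ^ (a k i)) * (∑ k, ∏ i, x i ^ (a k i)) ^ (-(ν₀.re + 1)) :=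
            mul_le_mul_of_nonneg_right hMS (Real.rpow_nonneg hSpos.le _)
        _ = (∑ k, ∏ i, x i ^ (a k i)) ^ (-ν₀.re) := hSc
    rw [e2, hbnd, hK]
    calc ‖ν₀‖ *
        (‖(∏ i, (x i : ℂ) ^ (ν i - 1)) *
          (∑ j', Function.update z j w j' * ∏ i, (x i : ℂ) ^ (a j' i)) ^ (-(ν₀ + 1))‖ *
            ∏ i, x i ^ (a j i))
        ≤ ‖ν₀‖ *
          ((rexp (π/2 * |ν₀.im|) * (c₀/2) ^ (-(ν₀.re + 1)) *
            ((∏ i, x i ^ ((ν i).re - 1)) * (∑ k, ∏ i, x i ^ (a k i)) ^ (-(ν₀.re + 1)))) *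
              ∏ i, x i ^ (a j i)) := by
          refine mul_le_mul_of_nonneg_left (mul_le_mul_of_nonneg_right ?_
            (Finset.prod_nonneg fun i _ => pow_nonneg (hx i).le _)) (norm_nonneg _)
          exact hPQ
      _ = (‖ν₀‖ * (rexp (π/2 * |ν₀.im|) * (c₀/2) ^ (-(ν₀.re + 1))) *
            (∏ i, x i ^ ((ν i).re - 1))) *
          ((∏ i, x i ^ (a j i)) * (∑ k, ∏ i, x i ^ (a k i)) ^ (-(ν₀.re + 1))) := by ring
      _ ≤ (‖ν₀‖ * (rexp (π/2 * |ν₀.im|) * (c₀/2) ^ (-(ν₀.re + 1))) *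
            (∏ i, x i ^ ((ν i).re - 1))) * (∑ k, ∏ i, x i ^ (a k i)) ^ (-ν₀.re) := by
          refine mul_le_mul_of_nonneg_left step2 ?_
          exact mul_nonneg (mul_nonneg (norm_nonneg _) hEnn) hPrnn
      _ = ‖ν₀‖ * (rexp (π/2 * |ν₀.im|) * (c₀/2) ^ (-(ν₀.re + 1))) *
            ((∏ i, x i ^ ((ν i).re - 1)) * (∑ k, ∏ i, x i ^ (a k i)) ^ (-ν₀.re)) := by ring
  have hdiff_all : ∀ x ∈ {x : Fin n → ℝ | ∀ i, 0 < x i}, ∀ w ∈ Metric.ball (z j) (c₀/2),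
      HasDerivAt (fun w => F w x) (F' w x) w := by
    intro x hx w hw
    have hsum : (fun w : ℂ => ∑ j', Function.update z j w j' * ∏ i, (x i : ℂ) ^ (a j' i)) =
        fun w : ℂ => w * (∏ i, (x i : ℂ) ^ (a j i)) +
          ∑ k ∈ Finset.univ \ {j}, z k * ∏ i, (x i : ℂ) ^ (a k i) := by
      funext w
      have h : (fun j' => Function.update z j w j' * ∏ i, (x i : ℂ) ^ (a j' i)) =
          Function.update (fun k => z k * ∏ i, (x i : ℂ) ^ (a k i)) j
            (w * ∏ i, (x i : ℂ) ^ (a j i)) := by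
        funext k
        rcases eq_or_ne k j with rfl | hk
        · simp
        · simp [Function.update_of_ne hk]
      rw [h, Finset.sum_update_of_mem (Finset.mem_univ j)]
    have hG : HasDerivAt
        (fun w : ℂ => ∑ j', Function.update z j w j' * ∏ i, (x i : ℂ) ^ (a j' i))
        (∏ i, (x i : ℂ) ^ (a j i)) w := by
      rw [hsum]
      exact (hasDerivAt_mul_const _).add_const _
    have hSpos : 0 < ∑ k, ∏ i, x i ^ (a k i) :=
      Finset.sum_pos (fun k _ => Finset.prod_pos fun i _ => pow_pos (hx i) _) hneN
    have hslit : (∑ j', Function.update z j w j' * ∏ i, (x i : ℂ) ^ (a j' i)) ∈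
        Complex.slitPlane := by
      refine Complex.mem_slitPlane_iff.2 (Or.inl ?_)
      exact lt_of_lt_of_le (mul_pos hr hSpos) (re_G_ge a _ (hupd w hw) x hx)
    have h := (hG.cpow_const hslit (c := -ν₀)).const_mul (∏ i, (x i : ℂ) ^ (ν i - 1))
    simp only [hF, hF']
    exact h
  have hder := hasDerivAt_integral_of_dominated_loc_of_deriv_le
    (μ := volume.restrict {x : Fin n → ℝ | ∀ i, 0 < x i}) (bound := bnd)
    (Metric.ball_mem_nhds _ hr) hFmeas hFint hF'meas
    ((ae_restrict_iff' hmeas).2 (ae_of_all _ hbd_all)) hbnd_int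
    ((ae_restrict_iff' hmeas).2 (ae_of_all _ hdiff_all))
  have hkey := hder.2.const_mul (Complex.Gamma ν₀)
  have hcong : (∫ x in {x : Fin n → ℝ | ∀ i, 0 < x i}, F' (z j) x) =
      (-ν₀) * ∫ x in {x : Fin n → ℝ | ∀ i, 0 < x i},
        (∏ i, (x i : ℂ) ^ (ν i + (a j i : ℂ) - 1)) *
          (∑ j', z j' * ∏ i, (x i : ℂ) ^ (a j' i)) ^ (-(ν₀ + 1)) := by
    rw [← integral_const_mul]
    refine setIntegral_congr_fun hmeas fun x hx => ?_
    simp only [hF', Function.update_eq_self]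
    have hPm : (∏ i, (x i : ℂ) ^ (ν i - 1)) * (∏ i, (x i : ℂ) ^ (a j i)) =
        ∏ i, (x i : ℂ) ^ (ν i + (a j i : ℂ) - 1) := by
      rw [← Finset.prod_mul_distrib]
      refine Finset.prod_congr rfl fun i _ => ?_
      rw [← Complex.cpow_natCast ((x i : ℂ)) (a j i),
        ← Complex.cpow_add _ _ (Complex.ofReal_ne_zero.2 (hx i).ne')]
      congr 1; ring
    rw [show ((∑ j', z j' * ∏ i, (x i : ℂ) ^ (a j' i)) ^ (-ν₀ - 1)) =
      ((∑ j', z j' * ∏ i, (x i : ℂ) ^ (a j' i)) ^ (-(ν₀ + 1))) from by congr 1; ring, ← hPm]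
    ring
  have hval : Complex.Gamma ν₀ * ∫ x in {x : Fin n → ℝ | ∀ i, 0 < x i}, F' (z j) x =
      -(Complex.Gamma (ν₀ + 1) * ∫ x in {x : Fin n → ℝ | ∀ i, 0 < x i},
        (∏ i, (x i : ℂ) ^ (ν i + (a j i : ℂ) - 1)) *
          (∑ j', z j' * ∏ i, (x i : ℂ) ^ (a j' i)) ^ (-(ν₀ + 1))) := by
    rw [hcong, Complex.Gamma_add_one ν₀ hν₀ne]
    ring
  rw [hval] at hkey
  simp only [hF] at hkey
  exact hkey
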